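/- arXiv:1401.8052 — 7 statements merged into one kernel-verified Lean document; each statement's English description precedes it below -/
import Mathlib

section
/- Let (c_j) be completely monotone with moment representation c_j = ∫_0^1 t^j dμ(t), and let 0 < p < 2. Then the sequence b_k = ∑_{j=k}^∞ c_j · binom(j,k) · (1−p)^{j−k} p^k is completely monotone. -/
open MeasureTheory

def CompletelyMonotone (c : ℕ → ℝ) : Prop :=
  ∀ j k : ℕ, 0 ≤ ∑ n ∈ Finset.range (k + 1), (-1 : ℝ) ^ n * (k.choose n) * c (n + j)

lemma auxD {t p : ℝ} (ht0 : 0 ≤ t) (ht1 : t ≤ 1) (hp0 : 0 < p) :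
    0 < 1 - t * (1 - p) := by
  rcases le_or_gt p 1 with h | h
  · nlinarith [mul_nonneg (sub_nonneg.2 ht1) (sub_nonneg.2 h)]
  · nlinarith [mul_nonneg ht0 (sub_nonneg.2 h.le)]

lemma aux1 {t p : ℝ} (ht0 : 0 ≤ t) (ht1 : t ≤ 1) (hp0 : 0 < p) (hp2 : p < 2) (k : ℕ) :
    HasSum (fun j : ℕ => t ^ j * (j.choose k : ℝ) * (1 - p) ^ (j - k) * p ^ k)
      ((t * p) ^ k / (1 - t * (1 - p)) ^ (k + 1)) := by
  have hr : ‖t * (1 - p)‖ < 1 := by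
    rw [Real.norm_eq_abs, abs_mul, abs_of_nonneg ht0]
    have h1 : |1 - p| < 1 := abs_lt.2 ⟨by linarith, by linarith⟩
    calc t * |1 - p| ≤ 1 * |1 - p| := mul_le_mul_of_nonneg_right ht1 (abs_nonneg _)
      _ < 1 := by simpa using h1
  have h := (hasSum_choose_mul_geometric_of_norm_lt_one k hr).mul_left ((t * p) ^ k)
  rw [← hasSum_nat_add_iff' k]
  have hz : ∑ i ∈ Finset.range k,
      t ^ i * (i.choose k : ℝ) * (1 - p) ^ (i - k) * p ^ k = 0 := by
    apply Finset.sum_eq_zero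
    intro i hi
    rw [Nat.choose_eq_zero_of_lt (Finset.mem_range.1 hi)]
    simp
  rw [hz, sub_zero]
  have hfun : ∀ n : ℕ, t ^ (n + k) * (((n + k).choose k : ℝ)) * (1 - p) ^ (n + k - k) * p ^ k
      = (t * p) ^ k * (((n + k).choose k : ℝ) * (t * (1 - p)) ^ n) := by
    intro n
    rw [Nat.add_sub_cancel, pow_add, mul_pow, mul_pow]
    ring
  convert h using 1
  · rfl
  · funext n
    exact hfun n
  · rw [mul_one_div]

lemma aux2 (s : ℝ) (k : ℕ) :
    ∑ n ∈ Finset.range (k + 1), (-1 : ℝ) ^ n * (k.choose n : ℝ) * s ^ n = (1 - s) ^ k := by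
  have h := add_pow (-s) 1 k
  rw [show (1 : ℝ) - s = -s + 1 by ring, h]
  refine (Finset.sum_congr rfl fun n _ => ?_).symm
  rw [one_pow, mul_one, neg_pow]
  ring

theorem stmt_1 (μ : MeasureTheory.Measure ℝ) [MeasureTheory.IsFiniteMeasure μ]
    (hsupp : μ (Set.Icc (0:ℝ) 1)ᶜ = 0) (c : ℕ → ℝ)
    (hc : ∀ j, c j = ∫ t in Set.Icc (0:ℝ) 1, t ^ j ∂μ)
    (p : ℝ) (hp0 : 0 < p) (hp2 : p < 2) (b : ℕ → ℝ)
    (hb : ∀ k, b k = ∑' j : ℕ, c j * (j.choose k) * (1 - p) ^ (j - k) * p ^ k) :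
    CompletelyMonotone b := by
  intro m k
  have hp1 : |1 - p| < 1 := abs_lt.2 ⟨by linarith, by linarith⟩
  set ν := μ.restrict (Set.Icc (0:ℝ) 1) with hν
  have hmem : ∀ᵐ t ∂ν, t ∈ Set.Icc (0:ℝ) 1 := ae_restrict_mem measurableSet_Icc
  -- integrability of g l
  have hg_int : ∀ l : ℕ, MeasureTheory.Integrable
      (fun t : ℝ => (t * p) ^ l / (1 - t * (1 - p)) ^ (l + 1)) ν := by
    intro l
    apply ContinuousOn.integrableOn_Icc
    apply ContinuousOn.div
    · exact ((continuous_id.mul continuous_const).pow l).continuousOn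
    · exact ((continuous_const.sub (continuous_id.mul continuous_const)).pow (l + 1)).continuousOn
    · intro t ht
      exact pow_ne_zero _ (ne_of_gt (auxD ht.1 ht.2 hp0))
  -- b l as an integral
  have hbint : ∀ l : ℕ, b l = ∫ t, (t * p) ^ l / (1 - t * (1 - p)) ^ (l + 1) ∂ν := by
    intro l
    have hF_int : ∀ j : ℕ, MeasureTheory.Integrable
        (fun t : ℝ => t ^ j * (j.choose l : ℝ) * (1 - p) ^ (j - l) * p ^ l) ν := by
      intro j
      exact ((((continuous_pow j).mul continuous_const).mul continuous_const).mul
        continuous_const).integrableOn_Icc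
    set K : ℕ → ℝ := fun j =>
      (ν Set.univ).toReal * ((j.choose l : ℝ) * |1 - p| ^ (j - l) * p ^ l) with hK
    have hbound : ∀ j : ℕ,
        ∫ t, ‖t ^ j * (j.choose l : ℝ) * (1 - p) ^ (j - l) * p ^ l‖ ∂ν ≤ K j := by
      intro j
      have h1 : ∫ t, ‖t ^ j * (j.choose l : ℝ) * (1 - p) ^ (j - l) * p ^ l‖ ∂ν
          ≤ ∫ _t, (j.choose l : ℝ) * |1 - p| ^ (j - l) * p ^ l ∂ν := by
        apply integral_mono_ae (hF_int j).norm (integrable_const _)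
        filter_upwards [hmem] with t ht
        have ht' : |t| ≤ 1 := abs_le.2 ⟨by linarith [ht.1], ht.2⟩
        have : ‖t ^ j * (j.choose l : ℝ) * (1 - p) ^ (j - l) * p ^ l‖
            = |t| ^ j * ((j.choose l : ℝ) * |1 - p| ^ (j - l) * p ^ l) := by
          rw [Real.norm_eq_abs, abs_mul, abs_mul, abs_mul, abs_pow, abs_pow, abs_pow,
            Nat.abs_cast, abs_of_pos hp0]
          ring
        rw [this]
        calc |t| ^ j * ((j.choose l : ℝ) * |1 - p| ^ (j - l) * p ^ l)
            ≤ 1 * ((j.choose l : ℝ) * |1 - p| ^ (j - l) * p ^ l) := by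
              apply mul_le_mul_of_nonneg_right (pow_le_one₀ (abs_nonneg t) ht')
              positivity
          _ = (j.choose l : ℝ) * |1 - p| ^ (j - l) * p ^ l := one_mul _
      rw [MeasureTheory.integral_const] at h1
      simpa [hK, smul_eq_mul, MeasureTheory.measureReal_def] using h1
    have hsumK : Summable K := by
      refine (summable_nat_add_iff l).mp ?_
      have h0 : Summable (fun n : ℕ => ((n + l).choose l : ℝ) * |1 - p| ^ n) :=
        summable_choose_mul_geometric_of_norm_lt_one l (by rwa [Real.norm_eq_abs, abs_abs])
      have : (fun n : ℕ => K (n + l)) = fun n : ℕ =>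
          ((ν Set.univ).toReal * p ^ l) * (((n + l).choose l : ℝ) * |1 - p| ^ n) := by
        funext n
        simp only [hK, Nat.add_sub_cancel]
        ring
      rw [this]
      exact h0.mul_left _
    have hFsum : Summable (fun j : ℕ =>
        ∫ t, ‖t ^ j * (j.choose l : ℝ) * (1 - p) ^ (j - l) * p ^ l‖ ∂ν) :=
      Summable.of_nonneg_of_le (fun j => integral_nonneg fun t => norm_nonneg _) hbound hsumK
    have hswap := MeasureTheory.integral_tsum_of_summable_integral_norm hF_int hFsum
    have hterm : ∀ j : ℕ, c j * (j.choose l : ℝ) * (1 - p) ^ (j - l) * p ^ l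
        = ∫ t, t ^ j * (j.choose l : ℝ) * (1 - p) ^ (j - l) * p ^ l ∂ν := by
      intro j
      rw [hc j, ← MeasureTheory.integral_mul_const, ← MeasureTheory.integral_mul_const,
        ← MeasureTheory.integral_mul_const]
    rw [hb l, tsum_congr hterm, hswap]
    apply MeasureTheory.integral_congr_ae
    filter_upwards [hmem] with t ht
    exact (aux1 ht.1 ht.2 hp0 hp2 l).tsum_eq
  -- rewrite the alternating sum as an integral
  have hkey : ∑ n ∈ Finset.range (k + 1), (-1 : ℝ) ^ n * (k.choose n) * b (n + m)
      = ∫ t, (∑ n ∈ Finset.range (k + 1), (-1 : ℝ) ^ n * (k.choose n) *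
          ((t * p) ^ (n + m) / (1 - t * (1 - p)) ^ (n + m + 1))) ∂ν := by
    rw [MeasureTheory.integral_finset_sum _
      (fun n _ => ((hg_int (n + m)).const_mul ((-1 : ℝ) ^ n * (k.choose n))))]
    exact Finset.sum_congr rfl fun n _ => by
      rw [hbint (n + m), ← MeasureTheory.integral_const_mul]
  rw [hkey, hν]
  apply MeasureTheory.setIntegral_nonneg measurableSet_Icc
  intro t ht
  have hD : 0 < 1 - t * (1 - p) := auxD ht.1 ht.2 hp0
  set D := 1 - t * (1 - p) with hDdef
  set s := t * p / D with hs
  have hs0 : 0 ≤ s := div_nonneg (mul_nonneg ht.1 hp0.le) hD.le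
  have hs1 : s ≤ 1 := by
    rw [hs, div_le_one hD, hDdef]
    nlinarith [ht.1, ht.2]
  have key : ∀ j : ℕ, (t * p) ^ j / D ^ (j + 1) = s ^ j / D := by
    intro j
    rw [hs, div_pow, div_div, ← pow_succ]
  have hsum : ∑ n ∈ Finset.range (k + 1), (-1 : ℝ) ^ n * (k.choose n) *
      ((t * p) ^ (n + m) / D ^ (n + m + 1))
      = (1 - s) ^ k * (s ^ m / D) := by
    rw [← aux2 s k, Finset.sum_mul]
    apply Finset.sum_congr rfl
    intro n _
    rw [key (n + m), pow_add]
    ring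
  rw [hsum]
  have h1s : 0 ≤ 1 - s := by linarith
  exact mul_nonneg (pow_nonneg h1s k) (div_nonneg (pow_nonneg hs0 m) hD.le)
end

section
/- The generating function B_p of the Fuss–Catalan numbers A_n(p,1) = (1/(pn−n+1)) binom(pn,n) satisfies the functional equation B_p(z) = 1 + z·B_p(z)^p as an identity of formal power series when p is a positive integer. -/
/-- The Fuss-Catalan numbers `A_n(p,1)` as rationals. -/
noncomputable def fussCatalan (p n : ℕ) : ℚ :=
  (((p * n).choose n : ℚ)) / (p * n - n + 1)

/-- Raney numbers (as rationals): `R p n r = r/(pn+r) * C(pn+r, n)`, with `R p 0 r = 1`. -/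
noncomputable def R (p n r : ℕ) : ℚ :=
  if n = 0 then 1 else (r : ℚ) / (p * n + r) * ((p * n + r).choose n)

lemma choose_cast_id (N k : ℕ) (h : k ≤ N) :
    (N.choose (k+1) : ℚ) * (k+1) = (N.choose k : ℚ) * ((N : ℚ) - k) := by
  have h1 := Nat.choose_succ_right_eq N k
  calc (N.choose (k+1) : ℚ) * (k+1) = ((N.choose (k+1) * (k+1) : ℕ) : ℚ) := by push_cast; ring
    _ = ((N.choose k * (N - k) : ℕ) : ℚ) := by rw [h1]
    _ = _ := by push_cast [Nat.cast_sub h]; ring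

lemma R_zero_right (p n : ℕ) : R p n 0 = if n = 0 then 1 else 0 := by
  rcases eq_or_ne n 0 with h | h <;> simp [R, h]

lemma R_rec (p : ℕ) (hp : 1 ≤ p) (n r : ℕ) :
    R p (n+1) (r+1) = R p (n+1) r + R p n (r+p) := by
  have hp' : (1:ℚ) ≤ (p:ℚ) := by exact_mod_cast hp
  rcases n with _ | m
  · -- n = 0
    have h1 : (p:ℚ) + ((r:ℚ)+1) ≠ 0 := by nlinarith
    have h2 : (p:ℚ) + (r:ℚ) ≠ 0 := by nlinarith
    simp only [Nat.zero_add, R, if_neg (one_ne_zero), if_pos rfl, mul_one,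
      Nat.choose_one_right, Nat.cast_one]
    push_cast [mul_one]
    field_simp
  · -- n = m+1, all indices positive
    have hMm : m + 1 ≤ p * (m+2) + r := by nlinarith
    have hb := choose_cast_id (p*(m+2)+r) (m+1) hMm
    have hpas : ((p*(m+2)+r+1).choose (m+2) : ℚ)
        = ((p*(m+2)+r).choose (m+1) : ℚ) + ((p*(m+2)+r).choose (m+2) : ℚ) := by
      exact_mod_cast congrArg (Nat.cast (R := ℚ)) (Nat.choose_succ_succ (p*(m+2)+r) (m+1))
    have harg : p*(m+1) + (r+p) = p*(m+2) + r := by ring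
    simp only [R, if_neg (Nat.succ_ne_zero _)]
    rw [harg]
    set a : ℚ := ((p*(m+2)+r).choose (m+1) : ℚ) with ha
    set b : ℚ := ((p*(m+2)+r).choose (m+2) : ℚ) with hbdef
    have hsarg : p*(m+2) + (r+1) = p*(m+2)+r+1 := by ring
    rw [hsarg, hpas]
    have hm2 : ((m:ℚ)+2) ≠ 0 := by positivity
    have hbb : b = a * (((p:ℚ)*(m+2)+r) - (m+1)) / ((m:ℚ)+2) := by
      rw [eq_div_iff hm2]
      push_cast at hb ⊢
      linarith [hb]
    have hd1 : (p:ℚ) * ((m:ℕ)+1+1 : ℚ) + ((r:ℚ)+1) ≠ 0 := by nlinarith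
    have hd2 : (p:ℚ) * ((m:ℕ)+1+1 : ℚ) + (r:ℚ) ≠ 0 := by nlinarith
    push_cast
    push_cast at hbb
    rw [hbb]
    push_cast at hd1 hd2
    field_simp
    ring

lemma R_conv (p : ℕ) (hp : 1 ≤ p) :
    ∀ n r s : ℕ, ∑ k ∈ Finset.range (n+1), R p k r * R p (n-k) s = R p n (r+s) := by
  intro n
  induction n using Nat.strong_induction_on with
  | _ n ih =>
    intro r s
    induction r with
    | zero =>
      rw [Finset.sum_eq_single 0]
      · simp [R]
      · intro k _ hk
        simp [R_zero_right, hk]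
      · simp
    | succ r ihr =>
      rcases n with _ | m
      · simp [R]
      · have e0 : ∑ k ∈ Finset.range (m+1+1), R p k (r+1) * R p (m+1-k) s
            = ∑ k ∈ Finset.range (m+1), R p (k+1) (r+1) * R p (m+1-(k+1)) s
              + R p 0 (r+1) * R p (m+1-0) s := Finset.sum_range_succ' _ (m+1)
        have e1 : ∑ k ∈ Finset.range (m+1), R p (k+1) (r+1) * R p (m+1-(k+1)) s
            = ∑ k ∈ Finset.range (m+1), (R p (k+1) r * R p (m+1-(k+1)) s
              + R p k (r+p) * R p (m-k) s) := by
          refine Finset.sum_congr rfl fun k _ => ?_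
          rw [R_rec p hp k r, add_mul, Nat.succ_sub_succ]
        have e3 : ∑ k ∈ Finset.range (m+1), R p (k+1) r * R p (m+1-(k+1)) s
              + R p 0 r * R p (m+1-0) s
            = ∑ k ∈ Finset.range (m+1+1), R p k r * R p (m+1-k) s :=
          (Finset.sum_range_succ' (fun k => R p k r * R p (m+1-k) s) (m+1)).symm
        have e34 : ∑ k ∈ Finset.range (m+1), R p (k+1) r * R p (m+1-(k+1)) s
              + R p 0 r * R p (m+1-0) s = R p (m+1) (r+s) := e3.trans ihr
        have e5 : ∑ k ∈ Finset.range (m+1), R p k (r+p) * R p (m-k) s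
            = R p m (r+p+s) := ih m (Nat.lt_succ_self m) (r+p) s
        have e6 : R p (m+1) ((r+s)+1) = R p (m+1) (r+s) + R p m ((r+s)+p) :=
          R_rec p hp m (r+s)
        have h01 : R p 0 (r+1) = R p 0 r := by simp [R]
        have ha1 : r+1+s = (r+s)+1 := by omega
        have ha2 : (r+s)+p = r+p+s := by omega
        rw [e0, e1, Finset.sum_add_distrib, h01, ha1, e6, ha2]
        linarith [e34, e5]

lemma fc_eq (p : ℕ) (hp : 1 ≤ p) (n : ℕ) : fussCatalan p n = R p n 1 := by
  have hp' : (1:ℚ) ≤ (p:ℚ) := by exact_mod_cast hp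
  rcases n with _ | m
  · simp [fussCatalan, R]
  · have hm : m ≤ p * (m+1) := by nlinarith
    have ha := choose_cast_id (p*(m+1)) m hm
    have hpas : ((p*(m+1)+1).choose (m+1) : ℚ)
        = ((p*(m+1)).choose m : ℚ) + ((p*(m+1)).choose (m+1) : ℚ) := by
      exact_mod_cast congrArg (Nat.cast (R := ℚ)) (Nat.choose_succ_succ (p*(m+1)) m)
    simp only [fussCatalan, R, if_neg (Nat.succ_ne_zero m)]
    rw [hpas]
    have hd1 : (p:ℚ)*((m:ℚ)+1) - ((m:ℚ)+1) + 1 ≠ 0 := by nlinarith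
    have hd2 : (p:ℚ)*((m:ℚ)+1) + 1 ≠ 0 := by nlinarith
    have hd3 : (p:ℚ)*((m:ℚ)+1) - (m:ℚ) ≠ 0 := by nlinarith
    have hm1 : ((m:ℚ)+1) ≠ 0 := by positivity
    have haa : ((p*(m+1)).choose m : ℚ)
        = ((p*(m+1)).choose (m+1) : ℚ) * ((m:ℚ)+1) / ((p:ℚ)*((m:ℚ)+1) - (m:ℚ)) := by
      rw [eq_div_iff hd3]
      push_cast at ha ⊢
      linarith [ha]
    rw [haa]
    push_cast
    field_simp
    rw [div_eq_iff (by nlinarith)]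
    ring

lemma coeff_pow (p : ℕ) (hp : 1 ≤ p) (m : ℕ) : ∀ n : ℕ,
    PowerSeries.coeff n ((PowerSeries.mk fun k => fussCatalan p k) ^ m) = R p n m := by
  induction m with
  | zero =>
    intro n
    rw [pow_zero, PowerSeries.coeff_one, R_zero_right]
  | succ m ihm =>
    intro n
    rw [pow_succ, PowerSeries.coeff_mul,
      Finset.Nat.sum_antidiagonal_eq_sum_range_succ (fun a b =>
        PowerSeries.coeff a ((PowerSeries.mk fun k => fussCatalan p k) ^ m)
          * PowerSeries.coeff b (PowerSeries.mk fun k => fussCatalan p k))]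
    have : ∀ k ∈ Finset.range (n+1),
        PowerSeries.coeff k ((PowerSeries.mk fun k => fussCatalan p k) ^ m)
          * PowerSeries.coeff (n-k) (PowerSeries.mk fun k => fussCatalan p k)
        = R p k m * R p (n-k) 1 := by
      intro k _
      rw [ihm k, PowerSeries.coeff_mk, fc_eq p hp]
    rw [Finset.sum_congr rfl this, R_conv p hp n m 1]

theorem stmt_7 (p : ℕ) (hp : 1 ≤ p) :
    PowerSeries.mk (fun n => fussCatalan p n) =
      1 + PowerSeries.X * (PowerSeries.mk (fun n => fussCatalan p n)) ^ p := by
  ext n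
  rw [PowerSeries.coeff_mk, map_add, PowerSeries.coeff_one]
  rcases n with _ | m
  · simp [fussCatalan]
  · rw [PowerSeries.coeff_succ_X_mul, coeff_pow p hp p m]
    have h := R_rec p hp m 0
    rw [R_zero_right] at h
    simp only [Nat.succ_ne_zero, if_neg, zero_add] at h
    rw [fc_eq p hp, h]
    simp
end

section
/- For every integer p ≥ 2 and every n ≥ 1, n · ∑_{k=1}^n ((−1)^{k−1}/k) · binom(n,k) · A_n(p,k) = binom(pn−1, n−1), where A_n(p,k) = (k/(pn+k)) binom(pn+k, n). -/
/-- The Fuss-Catalan (Raney) numbers `A_n(p,k)` as rationals. -/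
noncomputable def raney (p k n : ℕ) : ℚ :=
  if n = 0 then 1 else (k : ℚ) / (p * n + k) * ((p * n + k).choose n : ℚ)

/-- The `n`-th alternating difference of `k ↦ choose (m+k) r` vanishes for `r < n`. -/
lemma aux_vanish (r : ℕ) : ∀ n m : ℕ, r < n →
    ∑ k ∈ Finset.range (n + 1), (-1 : ℚ) ^ k * (n.choose k) * ((m + k).choose r) = 0 := by
  induction r with
  | zero =>
    intro n m hn
    simp only [Nat.choose_zero_right, Nat.cast_one, mul_one]
    have h := Int.alternating_sum_range_choose_of_ne (n := n) (by omega)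
    have := congrArg (Int.cast : ℤ → ℚ) h
    push_cast at this
    simpa using this
  | succ r ih =>
    intro n m hn
    obtain ⟨n', rfl⟩ : ∃ n', n = n' + 1 := ⟨n - 1, by omega⟩
    have hr : r < n' := by omega
    set f : ℕ → ℚ := fun j => (-1 : ℚ) ^ j * (n'.choose j) * ((m + j).choose (r + 1)) with hf
    set e : ℕ → ℚ := fun j => (-1 : ℚ) ^ j * (n'.choose j) * ((m + j).choose r) with he
    rw [Finset.sum_range_succ']
    have key : ∀ i, (-1 : ℚ) ^ (i + 1) * ((n' + 1).choose (i + 1)) *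
        ((m + (i + 1)).choose (r + 1)) = -(e i) - f i + f (i + 1) := by
      intro i
      have h1 : (n' + 1).choose (i + 1) = n'.choose i + n'.choose (i + 1) :=
        Nat.choose_succ_succ _ _
      have h2 : (m + (i + 1)).choose (r + 1) = (m + i).choose r + (m + i).choose (r + 1) := by
        have : m + (i + 1) = (m + i) + 1 := by ring
        rw [this, Nat.choose_succ_succ]
      simp only [hf, he, h1, h2]
      push_cast
      ring
    rw [Finset.sum_congr rfl fun i _ => key i]
    have tele : ∑ i ∈ Finset.range (n' + 1), f (i + 1)
        = ∑ i ∈ Finset.range (n' + 1), f i + f (n' + 1) - f 0 := by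
      have h1 := Finset.sum_range_succ f (n' + 1)
      have h2 := Finset.sum_range_succ' f (n' + 1)
      linarith [h1, h2.symm.trans h1]
    have hfn : f (n' + 1) = 0 := by
      simp [hf, Nat.choose_succ_self]
    have hsum : ∑ i ∈ Finset.range (n' + 1), e i = 0 := ih n' m hr
    rw [Finset.sum_add_distrib, Finset.sum_sub_distrib, tele, Finset.sum_neg_distrib, hsum, hfn]
    have hf0 : f 0 = ((m.choose (r + 1)) : ℚ) := by simp [hf]
    rw [hf0]
    simp only [Nat.choose_zero_right, Nat.cast_one, one_mul, Nat.add_zero, add_zero]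
    ring

theorem stmt_9 (p : ℕ) (hp : 2 ≤ p) (n : ℕ) (hn : 1 ≤ n) :
    (n : ℚ) * ∑ k ∈ Finset.Icc 1 n, (-1 : ℚ) ^ (k - 1) / k * (n.choose k) * raney p k n =
      ((p * n - 1).choose (n - 1) : ℚ) := by
  have hpn : 2 ≤ p * n := le_trans hp (Nat.le_mul_of_pos_right p hn)
  -- convert sum over Icc to range
  rw [← Finset.Ico_add_one_right_eq_Icc, Finset.sum_Ico_eq_sum_range, Finset.mul_sum]
  -- termwise simplification
  have hterm : ∀ i, (n : ℚ) * ((-1 : ℚ) ^ (1 + i - 1) / ((1 + i : ℕ) : ℚ) * (n.choose (1 + i)) *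
      raney p (1 + i) n) =
      (-1 : ℚ) ^ i * (n.choose (i + 1)) * ((p * n - 1 + (i + 1)).choose (n - 1)) := by
    intro i
    have hn0 : n ≠ 0 := by omega
    rw [raney, if_neg hn0]
    rw [show 1 + i - 1 = i from by omega, show 1 + i = i + 1 from by omega]
    have hid : (p * n + (i + 1)) * ((p * n - 1 + (i + 1)).choose (n - 1))
        = ((p * n + (i + 1)).choose n) * n := by
      have hkey := Nat.add_one_mul_choose_eq (p * n - 1 + (i + 1)) (n - 1)
      rw [show p * n - 1 + (i + 1) + 1 = p * n + (i + 1) from by omega,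
        show n - 1 + 1 = n from by omega] at hkey
      exact hkey
    have hcast : (((p * n + (i + 1)) : ℕ) : ℚ) * ((p * n - 1 + (i + 1)).choose (n - 1) : ℚ)
        = ((p * n + (i + 1)).choose n : ℚ) * n := by exact_mod_cast congrArg (Nat.cast : ℕ → ℚ) hid
    push_cast at hcast ⊢
    have hi1 : ((i : ℚ) + 1) ≠ 0 := by positivity
    have hd : ((p : ℚ) * n + ((i : ℚ) + 1)) ≠ 0 := by
      have : (0:ℚ) < (p:ℚ) * n := by
        have : (0:ℕ) < p * n := by omega
        exact_mod_cast this
      positivity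
    have hq : (((p * n - 1 + (i + 1)).choose (n - 1) : ℕ) : ℚ)
        = ((p * n + (i + 1)).choose n : ℚ) * n / ((p : ℚ) * n + ((i : ℚ) + 1)) := by
      rw [eq_div_iff hd]
      linear_combination hcast
    rw [hq]
    field_simp
  rw [Finset.sum_congr rfl fun i _ => hterm i]
  simp only [Nat.add_sub_cancel]
  -- apply the vanishing lemma
  have hv := aux_vanish (n - 1) n (p * n - 1) (by omega)
  rw [Finset.sum_range_succ'] at hv
  have h0 : (-1 : ℚ) ^ 0 * (n.choose 0) * ((p * n - 1 + 0).choose (n - 1))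
      = ((p * n - 1).choose (n - 1) : ℚ) := by simp
  have hflip : ∀ i, (-1 : ℚ) ^ (i + 1) * (n.choose (i + 1)) *
      ((p * n - 1 + (i + 1)).choose (n - 1))
      = -((-1 : ℚ) ^ i * (n.choose (i + 1)) * ((p * n - 1 + (i + 1)).choose (n - 1))) := by
    intro i; ring
  rw [Finset.sum_congr rfl fun i _ => hflip i, Finset.sum_neg_distrib, h0] at hv
  linarith [hv]
end

section
/- The Catalan numbers C_n = (1/(n+1)) binom(2n,n) are the moments of the Marchenko–Pastur distribution: C_n = (1/(2π)) ∫_0^4 t^n √((4−t)/t) dt for all n ≥ 0. -/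
open Real Set MeasureTheory intervalIntegral
lemma wallis_even (n : ℕ) :
    ∫ x in (0:ℝ)..(π/2), Real.sin x ^ (2*n) = π/2 * Nat.centralBinom n / 4^n := by
  induction n with
  | zero => simp [Nat.centralBinom]
  | succ k ih =>
    have h := integral_sin_pow (a := (0:ℝ)) (b := π/2) (2*k)
    rw [show 2*(k+1) = 2*k+2 by ring, h, ih]
    simp only [Real.sin_zero, Real.cos_pi_div_two, mul_zero, zero_pow, zero_mul, sub_zero,
      mul_zero, zero_div, zero_add]
    have hrec := Nat.succ_mul_centralBinom_succ k
    have hrecR : ((k:ℝ)+1) * (Nat.centralBinom (k+1) : ℝ) = 2*(2*k+1) * Nat.centralBinom k := by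
      exact_mod_cast hrec
    have h4 : (4:ℝ)^k ≠ 0 := by positivity
    have h2 : ((2*k:ℕ):ℝ) + 2 ≠ 0 := by positivity
    field_simp
    push_cast
    linear_combination (-2*π*(4:ℝ)^k) * hrecR
lemma cov (n : ℕ) :
    ∫ t in Set.Ioo (0:ℝ) 4, t ^ n * Real.sqrt ((4 - t) / t)
      = ∫ x in Set.Ioo (0:ℝ) (π/2),
          8 * 4^n * (Real.sin x ^ (2*n) - Real.sin x ^ (2*n+2)) := by
  set f : ℝ → ℝ := fun θ => 4 * Real.sin θ ^ 2 with hf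
  have hmono : StrictMonoOn f (Icc 0 (π/2)) := by
    intro x hx y hy hxy
    have h1 : Real.sin x < Real.sin y :=
      Real.sin_lt_sin_of_lt_of_le_pi_div_two (by nlinarith [Real.pi_pos, hx.1]) hy.2 hxy
    have h2 : 0 ≤ Real.sin x :=
      Real.sin_nonneg_of_nonneg_of_le_pi hx.1 (by nlinarith [Real.pi_pos, hx.2])
    simp only [hf]
    nlinarith
  have himg : f '' Ioo 0 (π/2) = Ioo (0:ℝ) 4 := by
    apply Subset.antisymm
    · have := hmono.image_Ioo_subset
      simpa [hf] using this
    · have hc : ContinuousOn f (Icc 0 (π/2)) := by fun_prop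
      have := intermediate_value_Ioo (by positivity : (0:ℝ) ≤ π/2) hc
      simpa [hf] using this
  rw [← himg]
  rw [integral_image_eq_integral_abs_deriv_smul measurableSet_Ioo
    (f' := fun x => 8 * Real.sin x * Real.cos x)
    (fun x _ => by
      have h : HasDerivAt f (8 * Real.sin x * Real.cos x) x := by
        have := ((Real.hasDerivAt_sin x).fun_pow 2).const_mul (4:ℝ)
        convert this using 1
        exacts [rfl, rfl, by ring]
      exact h.hasDerivWithinAt)
    (hmono.injOn.mono Ioo_subset_Icc_self)]
  apply setIntegral_congr_fun measurableSet_Ioo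
  intro x hx
  have hs : 0 < Real.sin x := Real.sin_pos_of_pos_of_lt_pi hx.1 (by nlinarith [Real.pi_pos, hx.2])
  have hc : 0 < Real.cos x := Real.cos_pos_of_mem_Ioo ⟨by nlinarith [Real.pi_pos, hx.1], hx.2⟩
  have hq : (4 - f x) / f x = (Real.cos x / Real.sin x) ^ 2 := by
    have hpy := Real.sin_sq_add_cos_sq x
    simp only [hf]
    field_simp
    nlinarith
  simp only [smul_eq_mul, hq, Real.sqrt_sq (by positivity : (0:ℝ) ≤ Real.cos x / Real.sin x),
    abs_of_pos (by positivity : (0:ℝ) < 8 * Real.sin x * Real.cos x)]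
  have hsub : Real.sin x ^ (2*n) - Real.sin x ^ (2*n+2)
      = Real.sin x ^ (2*n) * Real.cos x ^ 2 := by
    have hpy : Real.sin x ^ 2 = 1 - Real.cos x ^ 2 := by
      nlinarith [Real.sin_sq_add_cos_sq x]
    rw [pow_add, hpy]; ring
  rw [hsub]
  simp only [hf]
  rw [show (4 * Real.sin x ^ 2) ^ n = 4^n * Real.sin x ^ (2*n) by rw [mul_pow, ← pow_mul]]
  field_simp
lemma final (n : ℕ) :
    ∫ x in Set.Ioo (0:ℝ) (π/2),
        8 * 4^n * (Real.sin x ^ (2*n) - Real.sin x ^ (2*n+2)) = 2 * π * catalan n := by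
  have hset : ∫ x in Set.Ioo (0:ℝ) (π/2),
        8 * 4^n * (Real.sin x ^ (2*n) - Real.sin x ^ (2*n+2))
      = ∫ x in (0:ℝ)..(π/2), 8 * 4^n * (Real.sin x ^ (2*n) - Real.sin x ^ (2*n+2)) := by
    rw [intervalIntegral.integral_of_le (by positivity), integral_Ioc_eq_integral_Ioo]
  rw [hset, intervalIntegral.integral_const_mul,
    intervalIntegral.integral_sub
      (Continuous.intervalIntegrable (by fun_prop) _ _)
      (Continuous.intervalIntegrable (by fun_prop) _ _),
    wallis_even n, show 2*n+2 = 2*(n+1) by ring, wallis_even (n+1)]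
  have hcat : ((n:ℝ) + 1) * (catalan n : ℝ) = (Nat.centralBinom n : ℝ) := by
    exact_mod_cast succ_mul_catalan_eq_centralBinom n
  have hrec : ((n:ℝ)+1) * (Nat.centralBinom (n+1) : ℝ)
      = 2*(2*n+1) * Nat.centralBinom n := by
    exact_mod_cast Nat.succ_mul_centralBinom_succ n
  have h4 : (4:ℝ)^n ≠ 0 := by positivity
  have hn1 : ((n:ℝ)+1) ≠ 0 := by positivity
  have key : 4*(Nat.centralBinom n:ℝ) - (Nat.centralBinom (n+1):ℝ)
      = 2*(catalan n:ℝ) := by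
    apply mul_left_cancel₀ hn1
    linear_combination -2 * hcat - hrec
  have expand : 8 * (4:ℝ)^n * (π/2 * Nat.centralBinom n / 4^n
        - π/2 * Nat.centralBinom (n+1) / 4^(n+1))
      = π * (4*(Nat.centralBinom n:ℝ) - (Nat.centralBinom (n+1):ℝ)) := by
    rw [pow_succ]
    field_simp
    ring
  rw [expand, key]
  ring

theorem stmt_11 (n : ℕ) :
    (catalan n : ℝ) =
      (1 / (2 * Real.pi)) * ∫ t in Set.Ioo (0:ℝ) 4, t ^ n * Real.sqrt ((4 - t) / t) := by
  rw [cov n, final n]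
  field_simp
end

section
/- The sequence (binom(2n,n))_{n≥0} is the moment sequence of a probability measure on [0,4] with distribution function 1 − (2/π) arccos(√(t/4)); i.e. binom(2n,n) = ∫_0^4 t^n dμ(t) where μ has density d/dt (1 − (2/π) arccos(√(t/4))). -/
open Real MeasureTheory Set

lemma sinpow_aux (n : ℕ) : ∫ x in (0:ℝ)..(π/2), Real.sin x ^ (2*n)
    = π/2 * (((2*n).choose n : ℝ) / 4^n) := by
  induction n with
  | zero => simp
  | succ n ih =>
    have h : 2*(n+1) = 2*n + 2 := by ring
    rw [h, integral_sin_pow, Real.sin_zero, Real.cos_pi_div_two, ih]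
    have hc := Nat.succ_mul_centralBinom_succ n
    simp only [Nat.centralBinom] at hc
    rw [h] at hc
    have hc' : ((n:ℝ)+1) * ((2*n+2).choose (n+1) : ℝ) = 2*(2*(n:ℝ)+1) * ((2*n).choose n : ℝ) := by
      exact_mod_cast congrArg (Nat.cast : ℕ → ℝ) hc
    have h4 : (4:ℝ)^n ≠ 0 := by positivity
    push_cast
    field_simp
    linear_combination (-2 * π * 4^n) * hc'

lemma key_moment (n : ℕ) :
    (∫ t in Set.Ioo (0:ℝ) 4, t ^ n * (1 / (Real.pi * Real.sqrt (t * (4 - t)))))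
      = (((2 * n).choose n : ℕ) : ℝ) := by
  set f : ℝ → ℝ := fun θ => 4 * Real.sin θ ^ 2 with hf
  have pi_pos := Real.pi_pos
  have himg : f '' Set.Ioo 0 (π/2) = Set.Ioo (0:ℝ) 4 := by
    ext t
    constructor
    · rintro ⟨θ, ⟨h1, h2⟩, rfl⟩
      have hs : 0 < Real.sin θ := Real.sin_pos_of_pos_of_lt_pi h1 (by linarith)
      have hs1 : Real.sin θ < 1 := by
        have := Real.strictMonoOn_sin ⟨by linarith, h2.le⟩ ⟨by linarith, le_refl _⟩ h2
        simpa using this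
      have hfθ : f θ = 4 * Real.sin θ ^ 2 := rfl
      rw [hfθ]
      constructor
      · positivity
      · nlinarith
    · rintro ⟨ht0, ht4⟩
      have hst : Real.sqrt t / 2 < 1 := by
        have : Real.sqrt t < 2 := by
          have : Real.sqrt t < Real.sqrt 4 := Real.sqrt_lt_sqrt ht0.le ht4
          simpa [show Real.sqrt 4 = 2 by
            rw [show (4:ℝ) = 2^2 by norm_num, Real.sqrt_sq]; norm_num] using this
        linarith
      have hst0 : 0 < Real.sqrt t / 2 := by positivity
      refine ⟨Real.arcsin (Real.sqrt t / 2), ⟨Real.arcsin_pos.2 hst0,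
        Real.arcsin_lt_pi_div_two.2 hst⟩, ?_⟩
      have : Real.sin (Real.arcsin (Real.sqrt t / 2)) = Real.sqrt t / 2 :=
        Real.sin_arcsin (by linarith) (by linarith)
      simp only [hf, this]
      rw [div_pow, Real.sq_sqrt ht0.le]
      ring
  have hmeas : MeasurableSet (Set.Ioo (0:ℝ) (π/2)) := measurableSet_Ioo
  have hderiv : ∀ θ ∈ Set.Ioo (0:ℝ) (π/2),
      HasDerivWithinAt f (8 * Real.sin θ * Real.cos θ) (Set.Ioo (0:ℝ) (π/2)) θ := by
    intro θ _
    have h := (((Real.hasDerivAt_sin θ).pow 2).const_mul 4).hasDerivWithinAt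
      (s := Set.Ioo (0:ℝ) (π/2))
    exact h.congr_deriv (by push_cast; ring)
  have hinj : Set.InjOn f (Set.Ioo (0:ℝ) (π/2)) := by
    intro a ha b hb hab
    have hsa : 0 < Real.sin a := Real.sin_pos_of_pos_of_lt_pi ha.1 (by linarith [ha.2])
    have hsb : 0 < Real.sin b := Real.sin_pos_of_pos_of_lt_pi hb.1 (by linarith [hb.2])
    have : Real.sin a = Real.sin b := by
      have h2 : Real.sin a ^ 2 = Real.sin b ^ 2 := by
        simp only [hf] at hab; linarith
      nlinarith
    exact Real.injOn_sin ⟨by linarith [ha.1], ha.2.le⟩ ⟨by linarith [hb.1], hb.2.le⟩ this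
  rw [← himg, MeasureTheory.integral_image_eq_integral_abs_deriv_smul hmeas hderiv hinj]
  have hcongr : ∀ θ ∈ Set.Ioo (0:ℝ) (π/2),
      |8 * Real.sin θ * Real.cos θ| •
        (f θ ^ n * (1 / (Real.pi * Real.sqrt (f θ * (4 - f θ)))))
      = 2 / π * 4 ^ n * Real.sin θ ^ (2*n) := by
    intro θ hθ
    have hs : 0 < Real.sin θ := Real.sin_pos_of_pos_of_lt_pi hθ.1 (by linarith [hθ.2])
    have hc : 0 < Real.cos θ := Real.cos_pos_of_mem_Ioo ⟨by linarith [hθ.1], hθ.2⟩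
    have hsq : f θ * (4 - f θ) = (4 * Real.sin θ * Real.cos θ)^2 := by
      have := Real.sin_sq_add_cos_sq θ
      simp only [hf]; nlinarith
    have hsqrt : Real.sqrt (f θ * (4 - f θ)) = 4 * Real.sin θ * Real.cos θ := by
      rw [hsq, Real.sqrt_sq (by positivity)]
    have habs : |8 * Real.sin θ * Real.cos θ| = 8 * Real.sin θ * Real.cos θ :=
      abs_of_pos (by positivity)
    rw [smul_eq_mul, habs, hsqrt]
    simp only [hf]
    rw [mul_pow, ← pow_mul]
    have hπ : Real.pi ≠ 0 := ne_of_gt pi_pos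
    field_simp
    ring
  rw [MeasureTheory.setIntegral_congr_fun hmeas hcongr]
  rw [MeasureTheory.integral_const_mul]
  have hIoo : (∫ θ in Set.Ioo (0:ℝ) (π/2), Real.sin θ ^ (2*n))
      = ∫ x in (0:ℝ)..(π/2), Real.sin x ^ (2*n) := by
    rw [intervalIntegral.integral_of_le (by positivity), MeasureTheory.integral_Ioc_eq_integral_Ioo]
  rw [hIoo, sinpow_aux]
  have h4 : (4:ℝ)^n ≠ 0 := by positivity
  have hπ : Real.pi ≠ 0 := ne_of_gt pi_pos
  field_simp

theorem stmt_13 :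
    (∫ t in Set.Ioo (0:ℝ) 4, 1 / (Real.pi * Real.sqrt (t * (4 - t)))) = 1 ∧
      ∀ n : ℕ, (((2 * n).choose n : ℕ) : ℝ) =
        ∫ t in Set.Ioo (0:ℝ) 4, t ^ n * (1 / (Real.pi * Real.sqrt (t * (4 - t)))) := by
  constructor
  · have h := key_moment 0
    simpa using h
  · intro n
    exact (key_moment n).symm
end

section
/- Let μ be a finite positive measure on [0,τ] with τ > 0 and F(x) = ∫_0^τ dμ(t)/(1−tx) for real x < 1/τ. Then μ({τ}) = lim_{x↑1/τ} (1−τx) F(x). -/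
open MeasureTheory Filter Set

theorem stmt_17 (τ : ℝ) (hτ : 0 < τ) (μ : MeasureTheory.Measure ℝ)
    [MeasureTheory.IsFiniteMeasure μ] (hsupp : μ (Set.Icc (0:ℝ) τ)ᶜ = 0) (F : ℝ → ℝ)
    (hF : ∀ x, x < 1 / τ → F x = ∫ t in Set.Icc (0:ℝ) τ, (1 - t * x)⁻¹ ∂μ) :
    Filter.Tendsto (fun x => (1 - τ * x) * F x)
      (nhdsWithin (1 / τ) (Set.Iio (1 / τ))) (nhds ((μ {τ}).toReal)) := by
  have hτ' : (0:ℝ) < 1 / τ := by positivity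
  set ν := μ.restrict (Set.Icc (0:ℝ) τ) with hν
  set l := nhdsWithin (1/τ) (Set.Iio (1/τ)) with hl
  have hμτ : (μ {τ}).toReal = ∫ t, Set.indicator {τ} (fun _ => (1:ℝ)) t ∂ν := by
    rw [integral_indicator_const (1:ℝ) (measurableSet_singleton τ), hν, measureReal_def,
        Measure.restrict_apply (measurableSet_singleton τ)]
    have h1 : ({τ} : Set ℝ) ∩ Set.Icc (0:ℝ) τ = {τ} := by
      rw [Set.inter_eq_left, Set.singleton_subset_iff]
      exact ⟨hτ.le, le_rfl⟩
    rw [h1]; simp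
  have key : Tendsto (fun x => ∫ t, (1 - τ*x) * (1 - t*x)⁻¹ ∂ν) l
      (nhds (∫ t, Set.indicator {τ} (fun _ => (1:ℝ)) t ∂ν)) := by
    apply tendsto_integral_filter_of_dominated_convergence (fun _ => (1:ℝ))
    · filter_upwards with x
      exact (measurable_const.mul
        ((measurable_const.sub (measurable_id.mul measurable_const)).inv)).aestronglyMeasurable
    · have hx : Set.Ioo (0:ℝ) (1/τ) ∈ l := by
        rw [← Set.Ioi_inter_Iio]
        exact Filter.inter_mem (mem_nhdsWithin_of_mem_nhds (Ioi_mem_nhds hτ'))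
          self_mem_nhdsWithin
      filter_upwards [hx] with x hx
      filter_upwards [ae_restrict_mem measurableSet_Icc] with t ht
      have htx : t * x ≤ τ * x := mul_le_mul_of_nonneg_right ht.2 hx.1.le
      have hτx : τ * x < 1 := by
        have := mul_lt_mul_of_pos_left hx.2 hτ
        rwa [mul_one_div, div_self hτ.ne'] at this
      have h1 : 0 < 1 - τ * x := by linarith
      have h2 : 0 < 1 - t * x := by linarith
      rw [Real.norm_eq_abs, abs_of_nonneg (by positivity)]
      rw [← div_eq_mul_inv, div_le_one h2]
      linarith
    · exact integrable_const 1
    · filter_upwards [ae_restrict_mem measurableSet_Icc] with t ht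
      rcases eq_or_lt_of_le ht.2 with rfl | hlt
      · have : ∀ᶠ x in l, (1 - t*x) * (1 - t*x)⁻¹ = 1 := by
          filter_upwards [self_mem_nhdsWithin] with x hx
          have hτx : t * x < 1 := by
            have := mul_lt_mul_of_pos_left hx hτ
            rwa [mul_one_div, div_self hτ.ne'] at this
          exact mul_inv_cancel₀ (by linarith)
        rw [Set.indicator_of_mem (Set.mem_singleton _)]
        exact Tendsto.congr' (this.mono fun x h => h.symm) tendsto_const_nhds
      · rw [Set.indicator_of_notMem (by simp [hlt.ne])]
        have h0 : (1:ℝ) - t * (1/τ) ≠ 0 := by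
          have : t * (1/τ) < 1 := by
            rw [mul_one_div, div_lt_one hτ]; exact hlt
          linarith
        have h1 : Tendsto (fun x => 1 - τ*x) (nhds (1/τ)) (nhds 0) := by
          have : (0:ℝ) = 1 - τ * (1/τ) := by
            rw [mul_one_div, div_self hτ.ne']; ring
          rw [this]
          exact (continuous_const.sub (continuous_const.mul continuous_id)).tendsto _
        have h2 : Tendsto (fun x => (1 - t*x)⁻¹) (nhds (1/τ))
            (nhds (1 - t*(1/τ))⁻¹) :=
          (((continuous_const.sub (continuous_const.mul continuous_id)).tendsto _).inv₀ h0)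
        have : Tendsto (fun x => (1 - τ*x) * (1 - t*x)⁻¹) l (nhds (0 * (1 - t*(1/τ))⁻¹)) :=
          (h1.mul h2).mono_left nhdsWithin_le_nhds
        simpa using this
  rw [hμτ]
  apply key.congr'
  filter_upwards [self_mem_nhdsWithin] with x hx
  rw [hF x hx, ← integral_const_mul]
end

section
/- If (c_n) is the moment sequence of a finite positive measure on [0,1] whose distribution function is concave (equivalently, the measure has a nonincreasing density on (0,1] plus a possible atom at 0), then the sequence ((n+1) c_n)_{n≥0} is completely monotone. -/
open MeasureTheory Finset Set

theorem stmt_18 (a₀ : ℝ) (ha₀ : 0 ≤ a₀) (w : ℝ → ℝ)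
    (hw_anti : AntitoneOn w (Set.Ioc (0:ℝ) 1))
    (hw_nonneg : ∀ t ∈ Set.Ioc (0:ℝ) 1, 0 ≤ w t)
    (hw_int : MeasureTheory.IntegrableOn w (Set.Ioc (0:ℝ) 1))
    (c : ℕ → ℝ)
    (hc : ∀ n, c n = (if n = 0 then a₀ else 0) + ∫ t in Set.Ioc (0:ℝ) 1, t ^ n * w t) :
    CompletelyMonotone (fun n => (n + 1 : ℝ) * c n) := by
  intro j k
  set I : ℕ → ℝ := fun m => ∫ t in Set.Ioc (0:ℝ) 1, t ^ m * w t with hI_def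
  set D : ℝ → ℝ :=
    fun t => ((j:ℝ)+1) * t^j * (1-t)^k - (k:ℝ) * (1-t)^(k-1) * t^(j+1) with hD_def
  set t₀ : ℝ := ((j:ℝ)+1) / ((j:ℝ)+(k:ℝ)+1) with ht₀_def
  have hden : (0:ℝ) < (j:ℝ)+(k:ℝ)+1 := by positivity
  have hkc : (0:ℝ) ≤ (k:ℝ) := Nat.cast_nonneg k
  have ht₀mem : t₀ ∈ Set.Ioc (0:ℝ) 1 := by
    constructor
    · rw [ht₀_def]; positivity
    · rw [ht₀_def, div_le_one hden]; linarith
  -- derivative of φ(t) = t^(j+1)*(1-t)^k is D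
  have hφD : ∀ t : ℝ, HasDerivAt (fun s : ℝ => s^(j+1) * (1-s)^k) (D t) t := by
    intro t
    have h1 : HasDerivAt (fun s : ℝ => s^(j+1)) (((j:ℝ)+1) * t^j) t := by
      have := hasDerivAt_pow (j+1) t
      simpa [Nat.add_sub_cancel] using this
    have h2 : HasDerivAt (fun s : ℝ => (1-s)^k) ((k:ℝ) * (1-t)^(k-1) * (-1)) t :=
      ((hasDerivAt_id t).const_sub 1).pow k
    have := h1.fun_mul h2
    refine this.congr_deriv ?_
    rw [hD_def]; ring
  -- the polynomial sum equals φ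
  have hPφ : (fun s : ℝ => ∑ n ∈ Finset.range (k+1),
      (-1:ℝ)^n * (k.choose n) * s^(n+j+1)) = (fun s : ℝ => s^(j+1) * (1-s)^k) := by
    funext s
    rw [show (1:ℝ) - s = (-s) + 1 by ring, add_pow, Finset.mul_sum]
    refine Finset.sum_congr rfl fun n _ => ?_
    rw [neg_pow, one_pow, show n+j+1 = n+(j+1) by omega, pow_add]
    ring
  -- derivative of the polynomial sum
  have hQ : ∀ t : ℝ, HasDerivAt (fun s : ℝ => ∑ n ∈ Finset.range (k+1),
      (-1:ℝ)^n * (k.choose n) * s^(n+j+1))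
      (∑ n ∈ Finset.range (k+1),
        ((-1:ℝ)^n * (k.choose n) * ((n:ℝ)+(j:ℝ)+1)) * t^(n+j)) t := by
    intro t
    refine HasDerivAt.fun_sum fun n _ => ?_
    have := (hasDerivAt_pow (n+j+1) t).const_mul ((-1:ℝ)^n * (k.choose n))
    refine this.congr_deriv ?_
    rw [Nat.add_sub_cancel]
    push_cast
    ring
  have hQD : ∀ t : ℝ, ∑ n ∈ Finset.range (k+1),
      ((-1:ℝ)^n * (k.choose n) * ((n:ℝ)+(j:ℝ)+1)) * t^(n+j) = D t := by
    intro t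
    have h1 := hQ t
    rw [hPφ] at h1
    exact h1.unique (hφD t)
  -- sign of D
  have hfact : k ≠ 0 → ∀ t : ℝ,
      D t = t^j * (1-t)^(k-1) * (((j:ℝ)+1) - ((j:ℝ)+(k:ℝ)+1)*t) := by
    intro hk t
    obtain ⟨m, rfl⟩ := Nat.exists_eq_succ_of_ne_zero hk
    rw [hD_def]
    simp only [Nat.succ_sub_one]
    rw [pow_succ (1-t) m, pow_succ t j]
    push_cast
    ring
  -- key pointwise inequality
  have key : ∀ t ∈ Set.Ioc (0:ℝ) 1, D t * w t₀ ≤ D t * w t := by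
    intro t ht
    rcases eq_or_ne k 0 with hk | hk
    · have ht₀1 : t₀ = 1 := by
        rw [ht₀_def, hk]; push_cast; field_simp; ring
      have hD : 0 ≤ D t := by
        rw [hD_def, hk]
        simp only [pow_zero, Nat.cast_zero, Nat.zero_sub]
        have : (0:ℝ) ≤ t^j := pow_nonneg ht.1.le j
        nlinarith
      have hw : w t₀ ≤ w t := hw_anti ht ht₀mem (ht₀1 ▸ ht.2)
      exact mul_le_mul_of_nonneg_left hw hD
    · rcases le_total t t₀ with h | h
      · have hbr : (0:ℝ) ≤ ((j:ℝ)+1) - ((j:ℝ)+(k:ℝ)+1)*t := by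
          rw [ht₀_def, le_div_iff₀ hden] at h
          nlinarith
        have hD : 0 ≤ D t := by
          rw [hfact hk t]
          have h1 : (0:ℝ) ≤ t^j := pow_nonneg ht.1.le j
          have h2 : (0:ℝ) ≤ (1-t)^(k-1) := pow_nonneg (by linarith [ht.2]) _
          positivity
        exact mul_le_mul_of_nonneg_left (hw_anti ht ht₀mem h) hD
      · have hbr : ((j:ℝ)+1) - ((j:ℝ)+(k:ℝ)+1)*t ≤ 0 := by
          rw [ht₀_def, div_le_iff₀ hden] at h
          nlinarith
        have hD : D t ≤ 0 := by
          rw [hfact hk t]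
          have h1 : (0:ℝ) ≤ t^j := pow_nonneg ht.1.le j
          have h2 : (0:ℝ) ≤ (1-t)^(k-1) := pow_nonneg (by linarith [ht.2]) _
          exact mul_nonpos_of_nonneg_of_nonpos (mul_nonneg h1 h2) hbr
        exact mul_le_mul_of_nonpos_left (hw_anti ht₀mem ht h) hD
  -- integrability facts
  have hwAESM : AEStronglyMeasurable w (volume.restrict (Set.Ioc (0:ℝ) 1)) :=
    hw_int.aestronglyMeasurable
  have hMono : ∀ m : ℕ, IntegrableOn (fun t => t^m * w t) (Set.Ioc (0:ℝ) 1) := by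
    intro m
    refine Integrable.mono hw_int
      (((continuous_pow m).aestronglyMeasurable.mono_measure
        Measure.restrict_le_self).mul hwAESM) ?_
    rw [ae_restrict_iff' measurableSet_Ioc]
    filter_upwards with t ht
    have hw0 : 0 ≤ w t := hw_nonneg t ht
    have htm : |t^m| ≤ 1 := by
      rw [abs_of_nonneg (pow_nonneg ht.1.le m)]
      exact pow_le_one₀ ht.1.le ht.2
    rw [Real.norm_eq_abs, Real.norm_eq_abs, abs_mul]
    calc |t^m| * |w t| ≤ 1 * |w t| := by
          exact mul_le_mul_of_nonneg_right htm (abs_nonneg _)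
      _ = |w t| := one_mul _
  have hDcont : Continuous D := by
    rw [hD_def]; fun_prop
  have hDw_int : IntegrableOn (fun t => D t * w t) (Set.Ioc (0:ℝ) 1) := by
    have h1 : IntegrableOn (fun t => ∑ n ∈ Finset.range (k+1),
        ((-1:ℝ)^n * (k.choose n) * ((n:ℝ)+(j:ℝ)+1)) * (t^(n+j) * w t))
        (Set.Ioc (0:ℝ) 1) :=
      integrable_finset_sum _ (fun n _ => (hMono (n+j)).const_mul _)
    refine h1.congr (ae_of_all _ fun t => ?_)
    show _ = D t * w t
    rw [← hQD t, Finset.sum_mul]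
    exact Finset.sum_congr rfl fun n _ => by ring
  -- the moment-sum equals the integral of D * w
  have hB : ∑ n ∈ Finset.range (k+1),
      (-1:ℝ)^n * (k.choose n) * (((n:ℝ)+(j:ℝ)+1) * I (n+j))
      = ∫ t in Set.Ioc (0:ℝ) 1, D t * w t := by
    calc ∑ n ∈ Finset.range (k+1),
        (-1:ℝ)^n * (k.choose n) * (((n:ℝ)+(j:ℝ)+1) * I (n+j))
        = ∑ n ∈ Finset.range (k+1), ∫ t in Set.Ioc (0:ℝ) 1,
            ((-1:ℝ)^n * (k.choose n) * ((n:ℝ)+(j:ℝ)+1)) * (t^(n+j) * w t) := by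
          refine Finset.sum_congr rfl fun n _ => ?_
          rw [integral_const_mul, hI_def]
          ring
      _ = ∫ t in Set.Ioc (0:ℝ) 1, ∑ n ∈ Finset.range (k+1),
            ((-1:ℝ)^n * (k.choose n) * ((n:ℝ)+(j:ℝ)+1)) * (t^(n+j) * w t) :=
          (integral_finset_sum _ (fun n _ => (hMono (n+j)).const_mul _)).symm
      _ = ∫ t in Set.Ioc (0:ℝ) 1, D t * w t := by
          refine integral_congr_ae (ae_of_all _ fun t => ?_)
          show _ = D t * w t
          rw [← hQD t, Finset.sum_mul]
          exact Finset.sum_congr rfl fun n _ => by ring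
  -- FTC: integral of D
  have hFTC : ∫ t in Set.Ioc (0:ℝ) 1, D t = (0:ℝ)^k := by
    have h := intervalIntegral.integral_eq_sub_of_hasDerivAt
      (f := fun s : ℝ => s^(j+1) * (1-s)^k) (a := 0) (b := 1)
      (fun t _ => hφD t) (hDcont.intervalIntegrable 0 1)
    rw [intervalIntegral.integral_of_le zero_le_one] at h
    rw [h]
    simp
  -- lower bound for the integral
  have hBnn : 0 ≤ ∫ t in Set.Ioc (0:ℝ) 1, D t * w t := by
    have h1 : ∫ t in Set.Ioc (0:ℝ) 1, D t * w t₀ ≤ ∫ t in Set.Ioc (0:ℝ) 1, D t * w t := by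
      refine setIntegral_mono_on ?_ hDw_int measurableSet_Ioc key
      exact (hDcont.mul continuous_const).integrableOn_Ioc
    have h2 : ∫ t in Set.Ioc (0:ℝ) 1, D t * w t₀ = (0:ℝ)^k * w t₀ := by
      rw [integral_mul_const, hFTC]
    have h3 : 0 ≤ (0:ℝ)^k * w t₀ :=
      mul_nonneg (pow_nonneg le_rfl k) (hw_nonneg t₀ ht₀mem)
    linarith
  -- atom part
  have hA : 0 ≤ ∑ n ∈ Finset.range (k+1),
      (-1:ℝ)^n * (k.choose n) * (((n:ℝ)+(j:ℝ)+1) * (if n + j = 0 then a₀ else 0)) := by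
    refine Finset.sum_nonneg fun n _ => ?_
    by_cases h : n + j = 0
    · have hn : n = 0 := by omega
      have hj : j = 0 := by omega
      subst hn; subst hj
      simp [ha₀]
    · rw [if_neg h, mul_zero, mul_zero]
  -- assemble
  have hgoal : ∀ n : ℕ, (-1:ℝ)^n * (k.choose n) * ((fun n : ℕ => ((n:ℝ)+1) * c n) (n+j))
      = (-1:ℝ)^n * (k.choose n) * (((n:ℝ)+(j:ℝ)+1) * (if n + j = 0 then a₀ else 0))
        + (-1:ℝ)^n * (k.choose n) * (((n:ℝ)+(j:ℝ)+1) * I (n+j)) := by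
    intro n
    show (-1:ℝ)^n * (k.choose n) * ((((n+j : ℕ):ℝ)+1) * c (n+j)) = _
    rw [hc (n+j), hI_def]
    push_cast
    ring
  calc (0:ℝ) ≤ (∑ n ∈ Finset.range (k+1),
          (-1:ℝ)^n * (k.choose n) * (((n:ℝ)+(j:ℝ)+1) * (if n + j = 0 then a₀ else 0)))
        + ∑ n ∈ Finset.range (k+1),
          (-1:ℝ)^n * (k.choose n) * (((n:ℝ)+(j:ℝ)+1) * I (n+j)) :=
        add_nonneg hA (hB ▸ hBnn)
    _ = ∑ n ∈ Finset.range (k+1),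
          (-1:ℝ)^n * (k.choose n) * ((fun n : ℕ => ((n:ℝ)+1) * c n) (n+j)) := by
        rw [← Finset.sum_add_distrib]
        exact Finset.sum_congr rfl fun n _ => (hgoal n).symm
end
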